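/- Let (H,Y) be a joint distribution over 𝓗 × [M] whose marginal H is uniform over 𝓗, and let δ ∈ (0,1), α > 0. Suppose that for at least a (1−δ/4)-fraction of h ∈ 𝓗, the conditional distribution Y|_{H=h} is (δ/4, 2α/δ)-nonuniform. Then (H,Y) is (1−δ)-far in statistical distance from every distribution (H',Z) on 𝓗 × [M] with cp(H',Z) ≤ α/(|𝓗|·M). -/

import Mathlib

open Finset
open scoped Classical

set_option maxHeartbeats 1000000 in
/-- Lemma: nonuniformity implies far from small collision
probability, joint version: if the marginal of `H` is uniform on `𝓗` and for
at least a `(1-δ/4)`-fraction of `h ∈ 𝓗` the conditional distribution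
`Y|_{H=h}` is `(δ/4, 2α/δ)`-nonuniform, then `(H,Y)` is `(1-δ)`-far from every
distribution `(H',Z)` with `cp(H',Z) ≤ α/(|𝓗|·M)`. -/
theorem stmt18 {M : ℕ} {Hfam : Type} [Fintype Hfam] [Nonempty Hfam]
    (δ α : ℝ) (hδ0 : 0 < δ) (hδ1 : δ < 1) (hα : 0 < α)
    (P : Hfam × Fin M → ℝ) (hP0 : ∀ z, 0 ≤ P z) (hP1 : ∑ z, P z = 1)
    -- the marginal of `H` is uniform over `𝓗`
    (hmarg : ∀ hh : Hfam, ∑ y : Fin M, P (hh, y) = 1 / Fintype.card Hfam)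
    -- for at least a `(1-δ/4)`-fraction of `h`, `Y|_{H=h}` (with mass function
    -- `y ↦ |𝓗|·P(h,y)`) is `(δ/4, 2α/δ)`-nonuniform
    (hfrac : (1 - δ / 4) * Fintype.card Hfam ≤
      ((Finset.univ : Finset Hfam).filter (fun hh =>
        ∀ q : Fin M → ℝ, (∀ y, 0 ≤ q y) →
          (∀ y, q y ≤ Fintype.card Hfam * P (hh, y)) →
          (∑ y, q y) ≥ δ / 4 →
          ∑ y, (q y) ^ 2 > (2 * α / δ) / M)).card)
    (P' : Hfam × Fin M → ℝ) (hP'0 : ∀ z, 0 ≤ P' z) (hP'1 : ∑ z, P' z = 1)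
    (hP'cp : ∑ z, (P' z) ^ 2 ≤ α / (Fintype.card Hfam * M)) :
    (1 / 2 : ℝ) * ∑ z, |P z - P' z| ≥ 1 - δ := by
  classical
  have hNpos : 0 < Fintype.card Hfam := Fintype.card_pos
  have hN0 : (0:ℝ) < (Fintype.card Hfam : ℝ) := by exact_mod_cast hNpos
  set Nc : ℝ := (Fintype.card Hfam : ℝ) with hNcdef
  have hM0 : 0 < M := by
    rcases Nat.eq_zero_or_pos M with h | h
    · subst h; simp at hP1
    · exact h
  have hMc : (0:ℝ) < (M:ℝ) := by exact_mod_cast hM0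
  set Mc : ℝ := (M : ℝ) with hMcdef
  set q : Hfam × Fin M → ℝ := fun z => min (P z) (P' z) with hqdef
  have hq0 : ∀ z, 0 ≤ q z := fun z => le_min (hP0 z) (hP'0 z)
  have hqP : ∀ z, q z ≤ P z := fun z => min_le_left _ _
  have hqP' : ∀ z, q z ≤ P' z := fun z => min_le_right _ _
  have habs : ∀ z, |P z - P' z| = P z + P' z - 2 * q z := by
    intro z
    rcases le_total (P z) (P' z) with h | h
    · have hq : q z = P z := min_eq_left h
      rw [abs_of_nonpos (by linarith)]; linarith
    · have hq : q z = P' z := min_eq_right h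
      rw [abs_of_nonneg (by linarith)]; linarith
  have hsum : (1/2:ℝ) * ∑ z, |P z - P' z| = 1 - ∑ z, q z := by
    have h1 : ∑ z, |P z - P' z| = ∑ z, (P z + P' z - 2 * q z) :=
      Finset.sum_congr rfl fun z _ => habs z
    rw [h1, Finset.sum_sub_distrib, Finset.sum_add_distrib, ← Finset.mul_sum, hP1, hP'1]
    ring
  rw [ge_iff_le, hsum]
  have key : ∑ z, q z ≤ δ := by
    set s : Hfam → ℝ := fun hh => ∑ y, q (hh, y) with hsdef
    have hs0 : ∀ hh, 0 ≤ s hh := fun hh => Finset.sum_nonneg fun y _ => hq0 _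
    have hs1 : ∀ hh, s hh ≤ 1 / Nc := by
      intro hh
      calc s hh ≤ ∑ y, P (hh, y) := Finset.sum_le_sum fun y _ => hqP _
        _ = 1 / Nc := hmarg hh
    set G := ((Finset.univ : Finset Hfam).filter (fun hh =>
        ∀ q : Fin M → ℝ, (∀ y, 0 ≤ q y) →
          (∀ y, q y ≤ Nc * P (hh, y)) →
          (∑ y, q y) ≥ δ / 4 →
          ∑ y, (q y) ^ 2 > (2 * α / δ) / Mc)) with hGdef
    set Heavy := G.filter (fun hh => δ/4 ≤ Nc * s hh) with hHdef
    set Light := G.filter (fun hh => ¬ (δ/4 ≤ Nc * s hh)) with hLdef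
    -- per-heavy bound
    have hheavy : ∀ hh ∈ Heavy, ((2*α/δ)/Mc)/Nc^2 < ∑ y, (q (hh, y))^2 := by
      intro hh hmem
      rw [hHdef, Finset.mem_filter] at hmem
      obtain ⟨hG, hge⟩ := hmem
      rw [hGdef, Finset.mem_filter] at hG
      have hprop := hG.2 (fun y => Nc * q (hh, y))
        (fun y => mul_nonneg hN0.le (hq0 _))
        (fun y => mul_le_mul_of_nonneg_left (hqP _) hN0.le)
        (by rw [← Finset.mul_sum]; exact hge)
      have h2 : ∑ y, (Nc * q (hh, y))^2 = Nc^2 * ∑ y, (q (hh,y))^2 := by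
        rw [Finset.mul_sum]; exact Finset.sum_congr rfl fun y _ => by ring
      rw [h2] at hprop
      rw [div_lt_iff₀ (by positivity : (0:ℝ) < Nc^2)]
      linarith [mul_comm (∑ y, (q (hh,y))^2) (Nc^2)]
    have hcount : (Heavy.card : ℝ) * (((2*α/δ)/Mc)/Nc^2) ≤ α/(Nc*Mc) := by
      have h1 := Finset.card_nsmul_le_sum Heavy (fun hh => ∑ y, (q (hh,y))^2)
        (((2*α/δ)/Mc)/Nc^2) (fun hh hm => (hheavy hh hm).le)
      rw [nsmul_eq_mul] at h1
      have h2 : ∑ hh ∈ Heavy, ∑ y, (q (hh,y))^2 ≤ ∑ hh, ∑ y, (q (hh,y))^2 :=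
        Finset.sum_le_sum_of_subset_of_nonneg (Finset.subset_univ _)
          (fun hh _ _ => Finset.sum_nonneg fun y _ => sq_nonneg _)
      have h3 : ∑ z, (q z) ^2 = ∑ hh, ∑ y, (q (hh,y))^2 := by
        rw [Fintype.sum_prod_type]
      have h4 : ∑ z, (q z) ^2 ≤ ∑ z, (P' z) ^2 := Finset.sum_le_sum fun z _ => by
        have h5 := hq0 z; have h6 := hqP' z; nlinarith
      linarith [hP'cp, h3.symm.le]
    have hHC : (Heavy.card : ℝ) ≤ δ/2 * Nc := by
      have hc1 : (0:ℝ) < ((2*α/δ)/Mc)/Nc^2 := by positivity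
      have heq : (δ/2*Nc) * (((2*α/δ)/Mc)/Nc^2) = α/(Nc*Mc) := by
        field_simp
      rw [← heq] at hcount
      exact le_of_mul_le_mul_right hcount hc1
    -- split the sum
    have hsplit : ∑ z, q z = ∑ hh, s hh := by rw [Fintype.sum_prod_type]
    have hsplit2 : ∑ hh, s hh = ∑ hh ∈ univ \ G, s hh + ∑ hh ∈ G, s hh :=
      (Finset.sum_sdiff (Finset.subset_univ G)).symm
    have hsplit3 : ∑ hh ∈ G, s hh = ∑ hh ∈ Heavy, s hh + ∑ hh ∈ Light, s hh :=
      (Finset.sum_filter_add_sum_filter_not G _ s).symm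
    -- bound on univ \ G
    have hGsub : G ⊆ univ := Finset.subset_univ G
    have hGle : G.card ≤ Fintype.card Hfam := by
      simpa using Finset.card_le_card hGsub
    have hcard1 : ((univ \ G).card : ℝ) = Nc - G.card := by
      rw [Finset.card_sdiff_of_subset hGsub, Finset.card_univ, Nat.cast_sub hGle]
    have hfrac' : (1 - δ/4) * Nc ≤ (G.card : ℝ) := hfrac
    have hA : ∑ hh ∈ univ \ G, s hh ≤ δ/4 := by
      have h1 := Finset.sum_le_card_nsmul (univ \ G) s (1/Nc) (fun hh _ => hs1 hh)
      rw [nsmul_eq_mul] at h1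
      have h2 : ((univ \ G).card : ℝ) ≤ δ/4 * Nc := by
        rw [hcard1]; nlinarith
      have h3 : ((univ \ G).card : ℝ) * (1/Nc) ≤ (δ/4*Nc) * (1/Nc) :=
        mul_le_mul_of_nonneg_right h2 (by positivity)
      have heq : (δ/4*Nc)*(1/Nc) = δ/4 := by field_simp
      linarith
    have hB : ∑ hh ∈ Heavy, s hh ≤ δ/2 := by
      have h1 := Finset.sum_le_card_nsmul Heavy s (1/Nc) (fun hh _ => hs1 hh)
      rw [nsmul_eq_mul] at h1
      have h3 : (Heavy.card : ℝ) * (1/Nc) ≤ (δ/2*Nc) * (1/Nc) :=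
        mul_le_mul_of_nonneg_right hHC (by positivity)
      have heq : (δ/2*Nc)*(1/Nc) = δ/2 := by field_simp
      linarith
    have hC : ∑ hh ∈ Light, s hh ≤ δ/4 := by
      have hlight : ∀ hh ∈ Light, s hh ≤ δ/(4*Nc) := by
        intro hh hmem
        rw [hLdef, Finset.mem_filter] at hmem
        have h1 : Nc * s hh < δ/4 := lt_of_not_ge hmem.2
        rw [le_div_iff₀ (by positivity : (0:ℝ) < 4*Nc)]
        nlinarith
      have h1 := Finset.sum_le_card_nsmul Light s (δ/(4*Nc)) hlight
      rw [nsmul_eq_mul] at h1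
      have h2 : (Light.card : ℝ) ≤ Nc := by
        rw [hNcdef]; exact_mod_cast Finset.card_le_univ Light
      have h3 : (Light.card : ℝ) * (δ/(4*Nc)) ≤ Nc * (δ/(4*Nc)) :=
        mul_le_mul_of_nonneg_right h2 (by positivity)
      have heq : Nc * (δ/(4*Nc)) = δ/4 := by field_simp
      linarith
    rw [hsplit, hsplit2, hsplit3]
    linarith
  linarith
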